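/- Let g be increasing and suppose for each k ≥ 1, g(n̄ + Σ_{i=1}^k w_i + k n̄) = λ + c_k where c_k := (η_k − η_{k+1})/((1−p₀)^{k−1} p₀) with η_j ≥ 0, w_i ≥ 0, n̄ > 0, p₀ ∈ (0,1). Then (c_k) is increasing in k, and consequently η_j > 0 for all j ≥ 2 provided η_j → 0 is consistent with summability; in particular if complementary slackness η_j w_j = 0 holds, then w_j = 0 for all j ≥ 2. -/

import Mathlib

open Filter

/-- If `g` is increasing and for each `k` (index `k : ℕ` for the
original `k+1 ≥ 1`) `g(nbar + Σ_{i=1}^{k+1} w_i + (k+1) nbar) = λ + c_k` with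
`c_k = (η_k − η_{k+1})/((1−p₀)^k p₀)`, `η_j ≥ 0`, `η_j → 0`, `w_i ≥ 0`, `nbar > 0`,
`p₀ ∈ (0,1)`, then `(c_k)` is increasing; consequently `η_j > 0` for all `j ≥ 1`
(original `j ≥ 2`), and by complementary slackness `w_j = 0` for all such `j`. -/
theorem stmt13 (g : ℝ → ℝ) (hg : StrictMono g) (p₀ nbar lam : ℝ)
    (hp : p₀ ∈ Set.Ioo (0 : ℝ) 1) (hn : 0 < nbar)
    (w η c : ℕ → ℝ) (hw : ∀ j, 0 ≤ w j) (hη : ∀ j, 0 ≤ η j)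
    (hηlim : Tendsto η atTop (nhds 0))
    (hc : ∀ k : ℕ, c k = (η k - η (k + 1)) / ((1 - p₀) ^ k * p₀))
    (hstat : ∀ k : ℕ,
      g (nbar + (∑ i ∈ Finset.range (k + 1), w i) + (k + 1) * nbar) = lam + c k)
    (hcs : ∀ j : ℕ, η j * w j = 0) :
    StrictMono c ∧ (∀ j ≥ 1, 0 < η j) ∧ (∀ j ≥ 1, w j = 0) := by
  obtain ⟨hp0, hp1⟩ := hp
  have hD : ∀ k : ℕ, 0 < (1 - p₀) ^ k * p₀ := fun k =>
    mul_pos (pow_pos (by linarith) k) hp0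
  have hmono : StrictMono c := by
    apply strictMono_nat_of_lt_succ
    intro k
    have h1 := hstat k
    have h2 := hstat (k + 1)
    have harg : nbar + (∑ i ∈ Finset.range (k + 1), w i) + (k + 1) * nbar <
        nbar + (∑ i ∈ Finset.range (k + 1 + 1), w i) + (k + 1 + 1) * nbar := by
      have hsum : (∑ i ∈ Finset.range (k + 1), w i) ≤
          ∑ i ∈ Finset.range (k + 1 + 1), w i :=
        Finset.sum_le_sum_of_subset_of_nonneg
          (Finset.range_subset_range.mpr (by omega)) (fun i _ _ => hw i)
      have : ((k : ℝ) + 1) * nbar < ((k : ℝ) + 1 + 1) * nbar := by nlinarith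
      push_cast
      push_cast at hsum
      linarith
    have := hg harg
    push_cast at h1 h2 this
    linarith
  have hηpos : ∀ j ≥ 1, 0 < η j := by
    intro j hj
    by_contra h
    have hj0 : η j = 0 := le_antisymm (not_lt.mp h) (hη j)
    obtain ⟨m, rfl⟩ : ∃ m, j = m + 1 := ⟨j - 1, by omega⟩
    have hcm : 0 ≤ c m := by
      rw [hc m, hj0]
      exact div_nonneg (by simpa using hη m) (hD m).le
    have hcj : 0 < c (m + 1) := lt_of_le_of_lt hcm (hmono (Nat.lt_succ_self m))
    have := hc (m + 1)
    rw [hj0] at this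
    rw [eq_div_iff (hD (m + 1)).ne'] at this
    have hpos : 0 < c (m + 1) * ((1 - p₀) ^ (m + 1) * p₀) :=
      mul_pos hcj (hD (m + 1))
    have := hη (m + 1 + 1)
    linarith
  refine ⟨hmono, hηpos, fun j hj => ?_⟩
  have := hcs j
  rcases mul_eq_zero.mp this with h | h
  · exact absurd h (ne_of_gt (hηpos j hj))
  · exact h
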